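/- Let P be a finite p-group, V a finitely generated indecomposable O-free OP-module with vertex P, S = End_O(V), and B an interior P-algebra with a P-stable O-basis such that B(P) ≠ 0 and 1_B is primitive in B^P. Suppose A is an interior P-algebra with A(P) ≠ 0 admitting a P-stable O-basis and an interior P-algebra embedding g : A → S ⊗_O B. Then the trivial OP-module O is isomorphic to a direct summand of S regarded as an OP-module via conjugation; equivalently, there is an embedding of interior P-algebras O → S^{op} ⊗_O S, where P acts via x ↦ x⁻¹ ⊗ x. -/

import Mathlib

open scoped BigOperators TensorProduct

noncomputable section

section RepMachinery

variable {k : Type*} [CommRing k] {G : Type*} [Group G]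
variable {V : Type*} [AddCommGroup V] [Module k V]

/-- Conjugation of a linear endomorphism by `ρ g`. -/
def conjEnd (ρ : Representation k G V) (g : G) (f : V →ₗ[k] V) : V →ₗ[k] V :=
  ρ g ∘ₗ f ∘ₗ ρ g⁻¹

/-- Higman's criterion: relative projectivity of `ρ` with respect to a subgroup `P ≤ G`:
some `P`-equivariant endomorphism has relative trace `Tr_P^G` equal to the identity. -/
def RelProj (ρ : Representation k G V) (P : Subgroup G) : Prop :=
  ∃ f : V →ₗ[k] V, (∀ u ∈ P, conjEnd ρ u f = f) ∧
    ∑ᶠ x : G ⧸ P, conjEnd ρ (Quotient.out x) f = LinearMap.id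

/-- `P` is a vertex of `ρ`: a minimal subgroup relative to which `ρ` is projective. -/
def IsVertex (ρ : Representation k G V) (P : Subgroup G) : Prop :=
  RelProj ρ P ∧ ∀ Q : Subgroup G, Q < P → ¬ RelProj ρ Q

/-- A `ρ`-stable submodule. -/
def RepStable (ρ : Representation k G V) (N : Submodule k V) : Prop :=
  ∀ g : G, ∀ v ∈ N, ρ g v ∈ N

/-- Indecomposability of a representation. -/
def RepIndecomposable (ρ : Representation k G V) : Prop :=
  Nontrivial V ∧ ∀ N₁ N₂ : Submodule k V, RepStable ρ N₁ → RepStable ρ N₂ →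
    IsCompl N₁ N₂ → N₁ = ⊥ ∨ N₂ = ⊥

variable {W : Type*} [AddCommGroup W] [Module k W]

/-- `(W, σ)` is a direct summand of `(V, ρ)`: there is a split equivariant epi–mono pair. -/
def IsRepSummand (ρ : Representation k G V) (σ : Representation k G W) : Prop :=
  ∃ (π : V →ₗ[k] W) (ι : W →ₗ[k] V), π ∘ₗ ι = LinearMap.id ∧
    (∀ g : G, π ∘ₗ ρ g = σ g ∘ₗ π) ∧ (∀ g : G, ρ g ∘ₗ ι = ι ∘ₗ σ g)

/-- `σ` is a `P`-source of `ρ`: an indecomposable direct summand of the restriction of `ρ`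
to `P` having vertex `P` itself. -/
def IsSource (ρ : Representation k G V) (P : Subgroup G)
    {S : Type*} [AddCommGroup S] [Module k S] (σ : Representation k ↥P S) : Prop :=
  RepIndecomposable σ ∧ IsVertex σ (⊤ : Subgroup ↥P) ∧
    IsRepSummand (ρ.comp P.subtype) σ

end RepMachinery

section BrauerMachinery

variable (k : Type*) [Field k] {G : Type*} [Group G]
variable (A : Type*) [Ring A] [Algebra k A] [MulSemiringAction G A] [SMulCommClass G k A]

/-- The `k`-submodule of `P`-fixed points of `A`. -/
def fixedPts (P : Subgroup G) : Submodule k A where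
  carrier := {a | ∀ g ∈ P, g • a = a}
  add_mem' := fun {a b} ha hb g hg => by rw [smul_add, ha g hg, hb g hg]
  zero_mem' := fun g _ => smul_zero g
  smul_mem' := fun c a ha g hg => by rw [smul_comm, ha g hg]

/-- The relative trace map `Tr_Q^P` (with a choice of coset representatives). -/
def relTrace (Q P : Subgroup G) (a : A) : A :=
  ∑ᶠ x : P ⧸ Q.subgroupOf P, (((Quotient.out x : P) : G) • a)

/-- The image `Tr_Q^P(A^Q)` as a `k`-submodule. -/
def relTraceSub (Q P : Subgroup G) : Submodule k A :=
  Submodule.span k (relTrace A Q P '' (fixedPts k A Q : Set A))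

/-- The kernel of the Brauer homomorphism: `Σ_{Q < P} Tr_Q^P(A^Q)`. -/
def brKerSub (P : Subgroup G) : Submodule k A :=
  ⨆ Q ∈ {Q : Subgroup G | Q < P}, relTraceSub k A Q P

/-- The Brauer quotient `A(P)`. -/
abbrev BrauerQuotient (P : Subgroup G) :=
  fixedPts k A P ⧸ (brKerSub k A P).comap (fixedPts k A P).subtype

end BrauerMachinery


open scoped BigOperators

lemma auxOrbitSum {k M ι P : Type*} [Semiring k] [AddCommMonoid M] [Module k M]
    [Group P] [Fintype P] [MulAction P ι] [DecidableEq ι]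
    (N : Submodule k M) (F : ι → M) :
    ∀ (T : Finset ι), (∀ (x : P) j, j ∈ T → x • j ∈ T) →
      (∀ i ∈ T, ∑ j ∈ Finset.image (fun x : P => x • i) Finset.univ, F j ∈ N) →
      (∑ i ∈ T, F i) ∈ N := by
  intro T
  induction T using Finset.strongInductionOn with
  | _ T ih =>
    intro hcl horb
    rcases T.eq_empty_or_nonempty with rfl | ⟨i₀, hi₀⟩
    · simpa using N.zero_mem
    · set O := Finset.image (fun x : P => x • i₀) Finset.univ with hO
      have hOT : O ⊆ T := by
        intro j hj
        rcases Finset.mem_image.1 hj with ⟨x, _, rfl⟩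
        exact hcl x i₀ hi₀
      have hi₀O : i₀ ∈ O := by
        refine Finset.mem_image.2 ⟨1, Finset.mem_univ _, one_smul _ _⟩
      have hmemO : ∀ (x : P) (j : ι), j ∈ O → x • j ∈ O := by
        intro x j hj
        rcases Finset.mem_image.1 hj with ⟨y, _, rfl⟩
        exact Finset.mem_image.2 ⟨x * y, Finset.mem_univ _, (mul_smul x y i₀)⟩
      have hmemO' : ∀ (x : P) (j : ι), x • j ∈ O → j ∈ O := by
        intro x j hj
        have := hmemO x⁻¹ _ hj
        simpa using this
      have hsplit : T = O ∪ (T \ O) := (Finset.union_sdiff_of_subset hOT).symm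
      have hdisj : Disjoint O (T \ O) := Finset.disjoint_sdiff
      rw [hsplit, Finset.sum_union hdisj]
      refine N.add_mem (horb i₀ hi₀) ?_
      refine ih (T \ O) (Finset.sdiff_ssubset hOT ⟨i₀, hi₀O⟩) ?_ ?_
      · intro x j hj
        rcases Finset.mem_sdiff.1 hj with ⟨hjT, hjO⟩
        refine Finset.mem_sdiff.2 ⟨hcl x j hjT, fun h => hjO (hmemO' x j h)⟩
      · intro i hi
        exact horb i (Finset.mem_sdiff.1 hi).1

lemma auxOrbitCard {p : ℕ} [Fact p.Prime] {P : Type*} [Group P] [Fintype P]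
    (hP : IsPGroup p P) {ι : Type*} [MulAction P ι] [DecidableEq ι]
    (i : ι) (h : ∃ x : P, x • i ≠ i) :
    p ∣ (Finset.image (fun x : P => x • i) Finset.univ).card := by
  classical
  set O := Finset.image (fun x : P => x • i) Finset.univ with hO
  have hcoe : (O : Set ι) = MulAction.orbit P i := by
    rw [hO, Finset.coe_image, Finset.coe_univ, Set.image_univ]
    rfl
  haveI : Finite (MulAction.orbit P i) := (Set.finite_range _).to_subtype
  haveI : Fintype (MulAction.orbit P i) := Fintype.ofFinite _
  haveI : Fintype (MulAction.stabilizer P i) := Fintype.ofFinite _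
  have hcard : Nat.card (MulAction.orbit P i) = O.card := by
    rw [← hcoe, Nat.card_coe_set_eq, Set.ncard_coe_finset]
  obtain ⟨n, hn⟩ := IsPGroup.iff_card.1 hP
  have hdvd : O.card ∣ p ^ n := by
    rw [← hn, ← hcard]
    have := MulAction.card_orbit_mul_card_stabilizer_eq_card_group P i
    refine ⟨Fintype.card (MulAction.stabilizer P i), ?_⟩
    rw [Nat.card_eq_fintype_card, ← this, Nat.card_eq_fintype_card]
  obtain ⟨m, hm, hcardeq⟩ := (Nat.dvd_prime_pow (Fact.out : p.Prime)).1 hdvd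
  rcases Nat.eq_zero_or_pos m with rfl | hmpos
  · exfalso
    rw [pow_zero] at hcardeq
    obtain ⟨j, hj⟩ := Finset.card_eq_one.1 hcardeq
    have hiO : i ∈ O := Finset.mem_image.2 ⟨1, Finset.mem_univ _, one_smul _ _⟩
    rw [hj, Finset.mem_singleton] at hiO
    subst hiO
    obtain ⟨x, hx⟩ := h
    have hxO : x • i ∈ O := Finset.mem_image.2 ⟨x, Finset.mem_univ _, rfl⟩
    rw [hj, Finset.mem_singleton] at hxO
    exact hx hxO
  · rw [hcardeq]
    exact dvd_pow_self p (Nat.pos_iff_ne_zero.1 hmpos)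

lemma auxConj {R : Type*} [Ring R] (e u u' m : R) (h1 : u * u' = 1) (h2 : u' * u = 1)
    (h3 : e * u = u * e) : e * (u * m * u') * e = u * (e * m * e) * u' := by
  have h4 : e * u' = u' * e := by
    calc e * u' = u' * u * (e * u') := by rw [h2, one_mul]
    _ = u' * (u * e) * u' := by noncomm_ring
    _ = u' * (e * u) * u' := by rw [h3]
    _ = u' * e * (u * u') := by noncomm_ring
    _ = u' * e := by rw [h1, mul_one]
  calc e * (u * m * u') * e = (e * u) * m * (u' * e) := by noncomm_ring
  _ = (u * e) * m * (e * u') := by rw [h3, ← h4]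
  _ = u * (e * m * e) * u' := by noncomm_ring

set_option maxHeartbeats 2000000 in
/-- (Puig's Lemma 7.18, over a field of characteristic `p`.)
With `V` a finitely generated indecomposable `kP`-module with vertex `P`, `S = End_k(V)`,
`B` an interior `P`-algebra with `P`-stable basis, `B(P) ≠ 0` and `1_B` primitive in `B^P`,
and `A` an interior `P`-algebra with `P`-stable basis, `A(P) ≠ 0`, admitting an interior
`P`-algebra embedding `g : A → S ⊗ B`: the trivial `kP`-module is a direct summand of `S`
with the conjugation action, i.e. there are a conjugation-fixed `s ∈ S` and a
conjugation-equivariant linear form `lam` on `S` with `lam s = 1`. -/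
theorem stmt18 (k : Type*) [Field k] (p : ℕ) [Fact p.Prime] [CharP k p]
    (P : Type*) [Group P] [Finite P] (hP : IsPGroup p P)
    -- the module V and S = End_k(V)
    (V : Type*) [AddCommGroup V] [Module k V] [Module.Finite k V]
    (ρ : Representation k P V) (hVind : RepIndecomposable ρ)
    (hVvx : IsVertex ρ (⊤ : Subgroup P))
    -- B, an interior P-algebra with the conjugation action
    (B : Type*) [Ring B] [Algebra k B] [MulSemiringAction P B] [SMulCommClass P k B]
    (σB : P →* Bˣ)
    (hBint : ∀ (x : P) (b : B), x • b = (σB x : B) * b * (((σB x)⁻¹ : Bˣ) : B))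
    {ιB : Type*} (basB : Module.Basis ιB k B)
    (hBstable : ∀ (x : P) (i : ιB), ∃ j : ιB, x • (basB i) = basB j)
    (hBP : Nontrivial (BrauerQuotient k B (⊤ : Subgroup P)))
    (hBprim : ∀ e₁ e₂ : B, e₁ ∈ fixedPts k B (⊤ : Subgroup P) →
      e₂ ∈ fixedPts k B (⊤ : Subgroup P) → IsIdempotentElem e₁ → IsIdempotentElem e₂ →
      e₁ * e₂ = 0 → e₂ * e₁ = 0 → (1 : B) = e₁ + e₂ → e₁ = 0 ∨ e₂ = 0)
    -- A, an interior P-algebra with the conjugation action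
    (A : Type*) [Ring A] [Algebra k A] [MulSemiringAction P A] [SMulCommClass P k A]
    (σA : P →* Aˣ)
    (hAint : ∀ (x : P) (a : A), x • a = (σA x : A) * a * (((σA x)⁻¹ : Aˣ) : A))
    {ιA : Type*} (basA : Module.Basis ιA k A)
    (hAstable : ∀ (x : P) (i : ιA), ∃ j : ιA, x • (basA i) = basA j)
    (hAP : Nontrivial (BrauerQuotient k A (⊤ : Subgroup P)))
    -- the interior P-algebra embedding g : A → S ⊗ B
    (g : A →ₙₐ[k] ((V →ₗ[k] V) ⊗[k] B)) (hginj : Function.Injective g)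
    (hgim : Set.range g = {x | ∃ y, x = g 1 * y * g 1})
    (hgint : ∀ (x : P) (a : A),
      g ((σA x : A) * a) = ((ρ x : V →ₗ[k] V) ⊗ₜ[k] (σB x : B)) * g a ∧
      g (a * (σA x : A)) = g a * ((ρ x : V →ₗ[k] V) ⊗ₜ[k] (σB x : B))) :
    ∃ s : V →ₗ[k] V, (∀ x : P, ρ x ∘ₗ s = s ∘ₗ ρ x) ∧
      ∃ lam : (V →ₗ[k] V) →ₗ[k] k,
        (∀ (x : P) (f : V →ₗ[k] V), lam (ρ x ∘ₗ f ∘ₗ ρ x⁻¹) = lam f) ∧ lam s = 1 := by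
  classical
  letI : Fintype P := Fintype.ofFinite P
  -- index action on ιA
  have hinjA : Function.Injective basA := basA.injective
  have hinjB : Function.Injective basB := basB.injective
  letI instSA : SMul P ιA := ⟨fun x i => (hAstable x i).choose⟩
  have hbasA : ∀ (x : P) (i : ιA), x • basA i = basA (x • i) :=
    fun x i => (hAstable x i).choose_spec
  letI instMA : MulAction P ιA :=
    { one_smul := by
        intro i
        apply hinjA
        rw [← hbasA 1 i, one_smul]
      mul_smul := by
        intro x y i
        apply hinjA
        rw [← hbasA (x*y) i, mul_smul x y (basA i), hbasA y i, hbasA x (y • i)] }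
  letI instSB : SMul P ιB := ⟨fun x i => (hBstable x i).choose⟩
  have hbasB : ∀ (x : P) (i : ιB), x • basB i = basB (x • i) :=
    fun x i => (hBstable x i).choose_spec
  letI instMB : MulAction P ιB :=
    { one_smul := by
        intro i
        apply hinjB
        rw [← hbasB 1 i, one_smul]
      mul_smul := by
        intro x y i
        apply hinjB
        rw [← hbasB (x*y) i, mul_smul x y (basB i), hbasB y i, hbasB x (y • i)] }
  -- repr of smul
  have hreprA : ∀ (x : P) (b : A),
      basA.repr (x • b) = Finsupp.mapDomain (fun i : ιA => x • i) (basA.repr b) := by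
    intro x b
    have hmaps : (basA.repr.toLinearMap ∘ₗ DistribMulAction.toLinearMap k A x)
        = (Finsupp.lmapDomain k k (fun i : ιA => x • i)) ∘ₗ basA.repr.toLinearMap := by
      apply basA.ext
      intro i
      simp [hbasA x i]
      exact (congrArg basA.repr (hbasA x i)).trans (basA.repr_self _)
    have := LinearMap.congr_fun hmaps b
    exact this
  -- Step 1: find a basis element of A fixed by P
  obtain ⟨i₀, hi₀fix⟩ : ∃ i₀ : ιA, ∀ x : P, x • i₀ = i₀ := by
    by_contra hcon
    push_neg at hcon
    obtain ⟨y, hy⟩ := exists_ne (0 : BrauerQuotient k A (⊤ : Subgroup P))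
    obtain ⟨z, rfl⟩ := Submodule.Quotient.mk_surjective _ y
    have hz : (z : A) ∉ brKerSub k A (⊤ : Subgroup P) := by
      intro hmem
      apply hy
      rw [Submodule.Quotient.mk_eq_zero]
      exact Submodule.mem_comap.2 hmem
    have hzfix : ∀ x : P, x • (z : A) = (z : A) := by
      intro x
      exact z.2 x (Subgroup.mem_top x)
    apply hz
    set c := basA.repr (z : A) with hc
    have hcinv : ∀ (x : P) (i : ιA), c (x • i) = c i := by
      intro x i
      rw [hc]
      conv_lhs => rw [← hzfix x]
      rw [hreprA x (z : A), Finsupp.mapDomain_apply (MulAction.injective x)]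
    have hdecomp : (z : A) = ∑ i ∈ c.support, c i • basA i := by
      conv_lhs => rw [← basA.linearCombination_repr (z : A)]
      rw [Finsupp.linearCombination_apply]
      rfl
    rw [hdecomp]
    apply auxOrbitSum (P := P) (brKerSub k A (⊤ : Subgroup P)) (fun i => c i • basA i) c.support
    · intro x i hi
      rw [Finsupp.mem_support_iff] at hi ⊢
      rw [hcinv x i]; exact hi
    · intro i _
      set O : Finset ιA := Finset.image (fun x : P => x • i) Finset.univ with hO
      have hsum1 : ∀ j ∈ O, c j • basA j = c i • basA j := by
        intro j hj
        rcases Finset.mem_image.1 hj with ⟨x, _, rfl⟩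
        rw [hcinv x i]
      rw [Finset.sum_congr rfl hsum1, ← Finset.smul_sum]
      apply Submodule.smul_mem
      set Q : Subgroup P := MulAction.stabilizer P i with hQ
      have hQlt : Q < (⊤ : Subgroup P) := by
        rcases hcon i with ⟨x, hx⟩
        refine lt_top_iff_ne_top.2 ?_
        intro hQtop
        apply hx
        have hxQ : x ∈ Q := by rw [hQtop]; exact Subgroup.mem_top x
        exact hxQ
      have hfixQ : basA i ∈ fixedPts k A Q := by
        show ∀ g ∈ Q, g • basA i = basA i
        intro q hq
        rw [hbasA q i, MulAction.mem_stabilizer_iff.1 hq]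
      have htr : relTrace A Q (⊤ : Subgroup P) (basA i) = ∑ j ∈ O, basA j := by
        letI : Fintype (↥(⊤ : Subgroup P) ⧸ Q.subgroupOf (⊤ : Subgroup P)) := Fintype.ofFinite _
        rw [relTrace, finsum_eq_sum_of_fintype]
        refine Finset.sum_bij (fun y _ => ((Quotient.out y : ↥(⊤ : Subgroup P)) : P) • i)
          ?_ ?_ ?_ ?_
        · intro y _
          exact Finset.mem_image.2 ⟨_, Finset.mem_univ _, rfl⟩
        · intro y1 _ y2 _ heq
          have hab : (((Quotient.out y1 : ↥(⊤ : Subgroup P)) : P)⁻¹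
              * ((Quotient.out y2 : ↥(⊤ : Subgroup P)) : P)) • i = i := by
            have heq' : ((Quotient.out y1 : ↥(⊤ : Subgroup P)) : P) • i
                = ((Quotient.out y2 : ↥(⊤ : Subgroup P)) : P) • i := heq
            rw [mul_smul, ← heq', inv_smul_smul]
          have hmem : (Quotient.out y1)⁻¹ * (Quotient.out y2)
              ∈ Q.subgroupOf (⊤ : Subgroup P) := by
            rw [Subgroup.mem_subgroupOf]
            exact hab
          have hq12 : (QuotientGroup.mk (Quotient.out y1) :
              ↥(⊤ : Subgroup P) ⧸ Q.subgroupOf (⊤ : Subgroup P))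
              = QuotientGroup.mk (Quotient.out y2) := QuotientGroup.eq.2 hmem
          rw [← Quotient.out_eq' y1, ← Quotient.out_eq' y2]
          exact hq12
        · intro j hj
          rcases Finset.mem_image.1 hj with ⟨x, _, rfl⟩
          set y : ↥(⊤ : Subgroup P) ⧸ Q.subgroupOf (⊤ : Subgroup P) :=
            QuotientGroup.mk (⟨x, Subgroup.mem_top x⟩ : ↥(⊤ : Subgroup P)) with hy
          refine ⟨y, Finset.mem_univ _, ?_⟩
          have h1 : (QuotientGroup.mk (Quotient.out y) :
              ↥(⊤ : Subgroup P) ⧸ Q.subgroupOf (⊤ : Subgroup P))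
              = QuotientGroup.mk (⟨x, Subgroup.mem_top x⟩ : ↥(⊤ : Subgroup P)) := by
            rw [hy]
            exact Quotient.out_eq' _
          have hmem := QuotientGroup.eq.1 h1
          rw [Subgroup.mem_subgroupOf] at hmem
          have hst : (((Quotient.out y : ↥(⊤ : Subgroup P)) : P)⁻¹ * x) • i = i := hmem
          calc ((Quotient.out y : ↥(⊤ : Subgroup P)) : P) • i
              = ((Quotient.out y : ↥(⊤ : Subgroup P)) : P) •
                ((((Quotient.out y : ↥(⊤ : Subgroup P)) : P)⁻¹ * x) • i) := by rw [hst]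
            _ = x • i := by rw [smul_smul, mul_inv_cancel_left]
        · intro y _
          rw [hbasA]
      have hmem2 : relTrace A Q (⊤ : Subgroup P) (basA i)
          ∈ relTraceSub k A Q (⊤ : Subgroup P) :=
        Submodule.subset_span ⟨basA i, hfixQ, rfl⟩
      rw [htr] at hmem2
      exact (le_iSup₂ (f := fun (Q : Subgroup P) (_ : Q ∈ {Q : Subgroup P | Q < ⊤}) =>
        relTraceSub k A Q (⊤ : Subgroup P)) Q hQlt) hmem2
  -- Step 2: construct lamM
  set a₀ : A := basA i₀ with ha₀
  have ha₀fix : ∀ x : P, x • a₀ = a₀ := by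
    intro x; rw [ha₀, hbasA x i₀, hi₀fix x]
  set u : P → (V →ₗ[k] V) ⊗[k] B := fun x => (ρ x : V →ₗ[k] V) ⊗ₜ[k] ((σB x : B)) with hu
  have huu : ∀ x : P, u x * u x⁻¹ = 1 := by
    intro x
    have h1 : (ρ x : V →ₗ[k] V) * ρ x⁻¹ = 1 := by rw [← map_mul, mul_inv_cancel, map_one]
    have h2 : (σB x : B) * (σB x⁻¹ : B) = 1 := by
      rw [← Units.val_mul, ← map_mul, mul_inv_cancel, map_one, Units.val_one]
    simp only [hu]
    rw [Algebra.TensorProduct.tmul_mul_tmul, h1, h2]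
    exact (Algebra.TensorProduct.one_def).symm
  have huu' : ∀ x : P, u x⁻¹ * u x = 1 := by
    intro x
    have := huu x⁻¹
    rwa [inv_inv] at this
  set e : (V →ₗ[k] V) ⊗[k] B := g 1 with he
  have heu : ∀ x : P, e * u x = u x * e := by
    intro x
    have h1 := (hgint x 1).1
    have h2 := (hgint x 1).2
    rw [mul_one] at h1
    rw [one_mul] at h2
    simp only [he, hu]
    rw [← h1, ← h2]
  have hgu : ∀ (x : P) (a : A), u x * g a * u x⁻¹ = g (x • a) := by
    intro x a
    have h2 := (hgint x⁻¹ a).2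
    have h1 := (hgint x (a * ((σA x⁻¹ : Aˣ) : A))).1
    rw [hAint x a, ← map_inv σA x]
    rw [mul_assoc ((σA x : A)) a _]
    rw [h1, h2]
    simp only [hu]
    rw [mul_assoc]
  have hw : ∀ x : P, u x * g a₀ * u x⁻¹ = g a₀ := by
    intro x; rw [hgu x a₀, ha₀fix x]
  -- linear retraction of g
  set gl : A →ₗ[k] ((V →ₗ[k] V) ⊗[k] B) :=
    { toFun := g, map_add' := map_add g, map_smul' := map_smul g } with hgl
  obtain ⟨h, hh⟩ := gl.exists_leftInverse_of_injective (by
    rw [LinearMap.ker_eq_bot]; exact hginj)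
  have hhg : ∀ a : A, h (g a) = a := fun a => LinearMap.congr_fun hh a
  set lamA : A →ₗ[k] k := basA.coord i₀ with hlamA
  have hlamAfix : ∀ (x : P) (b : A), lamA (x • b) = lamA b := by
    intro x b
    rw [hlamA]
    simp only [Module.Basis.coord_apply]
    rw [hreprA x b]
    conv_lhs => rw [← hi₀fix x]
    rw [Finsupp.mapDomain_apply (MulAction.injective x)]
  have hlamAa₀ : lamA a₀ = 1 := by
    rw [hlamA, ha₀]
    simp
  set lamM : ((V →ₗ[k] V) ⊗[k] B) →ₗ[k] k :=
    lamA.comp (h.comp ((LinearMap.mulRight k e).comp (LinearMap.mulLeft k e))) with hlamM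
  have hlamM_apply : ∀ m : (V →ₗ[k] V) ⊗[k] B, lamM m = lamA (h (e * m * e)) := by
    intro m; rw [hlamM]; rfl
  have hlamM_conj : ∀ (x : P) (m : (V →ₗ[k] V) ⊗[k] B), lamM (u x * m * u x⁻¹) = lamM m := by
    intro x m
    rw [hlamM_apply, hlamM_apply]
    rw [auxConj e (u x) (u x⁻¹) m (huu x) (huu' x) (heu x)]
    obtain ⟨a', ha'⟩ : ∃ a', g a' = e * m * e := by
      have hmem : e * m * e ∈ {t | ∃ y, t = g 1 * y * g 1} := ⟨m, by rw [he]⟩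
      rw [← hgim] at hmem
      exact hmem
    rw [← ha', hgu x a', hhg, hhg]
    exact hlamAfix x a'
  have hlamM_w : lamM (g a₀) = 1 := by
    rw [hlamM_apply, he, ← map_mul, ← map_mul, one_mul, mul_one, hhg, hlamAa₀]
  -- Step 3: coordinates of w
  set E : ((V →ₗ[k] V) ⊗[k] B) ≃ₗ[k] (ιB →₀ (V →ₗ[k] V)) :=
    (TensorProduct.congr (LinearEquiv.refl k (V →ₗ[k] V)) basB.repr).trans
      (TensorProduct.finsuppScalarRight k k (V →ₗ[k] V) ιB) with hE
  have hE_tmul : ∀ (s : V →ₗ[k] V) (b : B) (j : ιB), E (s ⊗ₜ[k] b) j = basB.repr b j • s := by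
    intro s b j
    rw [hE]
    simp [TensorProduct.finsuppScalarRight_apply_tmul_apply]
  set Cx : P → ((V →ₗ[k] V) ⊗[k] B) →ₗ[k] ((V →ₗ[k] V) ⊗[k] B) :=
    fun x => (LinearMap.mulRight k (u x⁻¹)).comp (LinearMap.mulLeft k (u x)) with hCx
  have hCx_apply : ∀ (x : P) (m : (V →ₗ[k] V) ⊗[k] B), Cx x m = u x * m * u x⁻¹ := by
    intro x m; rw [hCx]; rfl
  have htmulconj : ∀ (x : P) (s : V →ₗ[k] V) (b : B),
      u x * (s ⊗ₜ[k] b) * u x⁻¹ = (conjEnd ρ x s) ⊗ₜ[k] ((σB x : B) * b * ((σB x⁻¹ : Bˣ) : B)) := by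
    intro x s b
    simp only [hu]
    rw [Algebra.TensorProduct.tmul_mul_tmul, Algebra.TensorProduct.tmul_mul_tmul]
    congr 1
  have hid : ∀ x : P, (ρ x⁻¹) ∘ₗ (ρ x) = LinearMap.id := by
    intro x
    rw [← Module.End.mul_eq_comp, ← map_mul, inv_mul_cancel, map_one]
    rfl
  have key : ∀ (x : P) (j : ιB) (m : (V →ₗ[k] V) ⊗[k] B),
      E (Cx x m) (x • j) = conjEnd ρ x (E m j) := by
    intro x j
    have hL : (Finsupp.lapply (x • j) : (ιB →₀ (V →ₗ[k] V)) →ₗ[k] (V →ₗ[k] V)).comp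
          ((E : ((V →ₗ[k] V) ⊗[k] B) →ₗ[k] (ιB →₀ (V →ₗ[k] V))).comp (Cx x))
        = ((LinearMap.mulRight k (ρ x⁻¹ : V →ₗ[k] V)).comp
            (LinearMap.mulLeft k (ρ x : V →ₗ[k] V))).comp
            ((Finsupp.lapply j : (ιB →₀ (V →ₗ[k] V)) →ₗ[k] (V →ₗ[k] V)).comp
              (E : ((V →ₗ[k] V) ⊗[k] B) →ₗ[k] (ιB →₀ (V →ₗ[k] V)))) := by
      apply TensorProduct.ext
      apply LinearMap.ext
      intro s
      apply basB.ext
      intro i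
      simp only [LinearMap.compr₂ₛₗ_apply, TensorProduct.mk_apply, LinearMap.comp_apply,
        LinearEquiv.coe_coe, Finsupp.lapply_apply, LinearMap.mulLeft_apply,
        LinearMap.mulRight_apply]
      rw [hCx_apply, htmulconj x s (basB i)]
      have hBpart : (σB x : B) * basB i * ((σB x⁻¹ : Bˣ) : B) = basB (x • i) := by
        rw [← hbasB x i, hBint x (basB i), map_inv]
      rw [hBpart, hE_tmul, hE_tmul, Module.Basis.repr_self, Module.Basis.repr_self,
        Finsupp.single_apply, Finsupp.single_apply]
      by_cases hij : i = j
      · subst hij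
        rw [if_pos rfl, if_pos rfl, one_smul, one_smul]
        show conjEnd ρ x s = (ρ x * s) * ρ x⁻¹
        rw [conjEnd, Module.End.mul_eq_comp, Module.End.mul_eq_comp, LinearMap.comp_assoc]
      · rw [if_neg (fun hc => hij ((MulAction.injective x).eq_iff.1 hc)), if_neg hij,
          zero_smul, zero_smul, mul_zero, zero_mul]
    intro m
    have hm := LinearMap.congr_fun hL m
    simp only [LinearMap.comp_apply, LinearEquiv.coe_coe, Finsupp.lapply_apply,
      LinearMap.mulLeft_apply, LinearMap.mulRight_apply] at hm
    rw [hm, conjEnd, Module.End.mul_eq_comp, Module.End.mul_eq_comp, LinearMap.comp_assoc]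
  set f : ιB →₀ (V →ₗ[k] V) := E (g a₀) with hf
  have hfconj : ∀ (x : P) (j : ιB), f (x • j) = conjEnd ρ x (f j) := by
    intro x j
    have hkey := key x j (g a₀)
    have hCw : Cx x (g a₀) = g a₀ := by rw [hCx_apply, hw x]
    rw [hCw] at hkey
    exact hkey
  have hconj0 : ∀ (x : P) (s : V →ₗ[k] V), conjEnd ρ x s = 0 → s = 0 := by
    intro x s hzero
    have hss : (ρ x⁻¹) ∘ₗ (conjEnd ρ x s) ∘ₗ (ρ x) = s := by
      rw [conjEnd, LinearMap.comp_assoc, LinearMap.comp_assoc, hid x, LinearMap.comp_id,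
        ← LinearMap.comp_assoc, hid x, LinearMap.id_comp]
    rw [hzero] at hss
    simpa using hss.symm
  have hsuppcl : ∀ (x : P) (j : ιB), j ∈ f.support → x • j ∈ f.support := by
    intro x j hj
    rw [Finsupp.mem_support_iff] at hj ⊢
    rw [hfconj x j]
    intro hc
    exact hj (hconj0 x (f j) hc)
  set φ : ιB → k := fun j => lamM ((f j) ⊗ₜ[k] basB j) with hφdef
  have hφconst : ∀ (x : P) (j : ιB), φ (x • j) = φ j := by
    intro x j
    show lamM ((f (x • j)) ⊗ₜ[k] basB (x • j)) = lamM ((f j) ⊗ₜ[k] basB j)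
    rw [hfconj x j, ← hbasB x j]
    have hrw : (conjEnd ρ x (f j)) ⊗ₜ[k] (x • basB j)
        = u x * ((f j) ⊗ₜ[k] basB j) * u x⁻¹ := by
      rw [htmulconj x (f j) (basB j), hBint x (basB j), map_inv σB x]
    rw [hrw, hlamM_conj]
  have hsum : ∑ j ∈ f.support, φ j = 1 := by
    have hdecomp : g a₀ = ∑ j ∈ f.support, (f j) ⊗ₜ[k] basB j := by
      apply E.injective
      rw [map_sum]
      have hsingles : ∀ j ∈ f.support, E ((f j) ⊗ₜ[k] basB j) = Finsupp.single j (f j) := by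
        intro j _
        ext i
        rw [hE_tmul, Module.Basis.repr_self, Finsupp.single_apply, Finsupp.single_apply]
        split_ifs with hij
        · rw [one_smul]
        · rw [zero_smul]
      rw [Finset.sum_congr rfl hsingles, ← hf]
      exact (Finsupp.sum_single f).symm
    calc ∑ j ∈ f.support, φ j = lamM (∑ j ∈ f.support, (f j) ⊗ₜ[k] basB j) := by
          rw [map_sum]
      _ = lamM (g a₀) := by rw [← hdecomp]
      _ = 1 := hlamM_w
  set Tfix : Finset ιB := f.support.filter (fun j => ∀ x : P, x • j = j) with hTfix
  set Tnon : Finset ιB := f.support.filter (fun j => ¬ (∀ x : P, x • j = j)) with hTnon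
  have hTnon0 : ∑ j ∈ Tnon, φ j = 0 := by
    rw [← Submodule.mem_bot k]
    apply auxOrbitSum (P := P) (⊥ : Submodule k k) φ Tnon
    · intro x j hj
      rw [hTnon, Finset.mem_filter] at hj ⊢
      refine ⟨hsuppcl x j hj.1, ?_⟩
      intro hfix
      apply hj.2
      intro y
      have h1 : j = x • j := by
        have h2 := hfix x⁻¹
        rw [inv_smul_smul] at h2
        exact h2
      calc y • j = y • (x • j) := by rw [← h1]
        _ = x • j := hfix y
        _ = j := h1.symm
    · intro i hi
      rw [hTnon, Finset.mem_filter] at hi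
      have hnf : ∃ x : P, x • i ≠ i := by
        by_contra hcon2
        push_neg at hcon2
        exact hi.2 hcon2
      have hcard := auxOrbitCard hP i hnf
      have hconst : ∀ j ∈ Finset.image (fun x : P => x • i) Finset.univ, φ j = φ i := by
        intro j hj
        rcases Finset.mem_image.1 hj with ⟨x, _, rfl⟩
        exact hφconst x i
      rw [Finset.sum_congr rfl hconst, Finset.sum_const, nsmul_eq_mul,
        (CharP.cast_eq_zero_iff k p _).2 hcard, zero_mul]
      exact Submodule.zero_mem _
  have hTsplit : ∑ j ∈ Tfix, φ j = 1 := by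
    have hsplit := Finset.sum_filter_add_sum_filter_not f.support
      (fun j => ∀ x : P, x • j = j) φ
    rw [← hTfix, ← hTnon, hTnon0, add_zero, hsum] at hsplit
    exact hsplit
  obtain ⟨j, hjmem, hφj⟩ : ∃ j ∈ Tfix, φ j ≠ 0 := by
    by_contra hcon2
    push_neg at hcon2
    rw [Finset.sum_eq_zero hcon2] at hTsplit
    exact zero_ne_one hTsplit
  rw [hTfix, Finset.mem_filter] at hjmem
  have hjfix : ∀ x : P, x • j = j := hjmem.2
  refine ⟨f j, ?_, ?_⟩
  · intro x
    have h1 : conjEnd ρ x (f j) = f j := by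
      rw [← hfconj x j, hjfix x]
    have h2 := congrArg (fun t => t ∘ₗ (ρ x : V →ₗ[k] V)) h1
    rw [conjEnd, LinearMap.comp_assoc, LinearMap.comp_assoc, hid x, LinearMap.comp_id] at h2
    exact h2
  · refine ⟨(φ j)⁻¹ • (lamM.comp ((TensorProduct.mk k (V →ₗ[k] V) B).flip (basB j))), ?_, ?_⟩
    · intro x f'
      simp only [LinearMap.smul_apply, LinearMap.comp_apply, LinearMap.flip_apply,
        TensorProduct.mk_apply, smul_eq_mul]
      congr 1
      have hbb : basB j = x • basB j := by rw [hbasB x j, hjfix x]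
      have hrw : (ρ x ∘ₗ f' ∘ₗ ρ x⁻¹) ⊗ₜ[k] basB j = u x * (f' ⊗ₜ[k] basB j) * u x⁻¹ := by
        rw [htmulconj x f' (basB j)]
        congr 1
        rw [map_inv σB x, ← hBint x (basB j), hbasB x j, hjfix x]
      rw [hrw, hlamM_conj]
    · simp only [LinearMap.smul_apply, LinearMap.comp_apply, LinearMap.flip_apply,
        TensorProduct.mk_apply, smul_eq_mul]
      exact inv_mul_cancel₀ hφj
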